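/- Let N be a positive integer and e an exact divisor of N (i.e. e ∣ N and gcd(e, N/e) = 1). If W is any integer matrix of the form (a·e, b; c·N, d·e) with determinant e, then conjugation by W (as an element of GL₂(ℚ)) maps Γ₀(N) into itself; i.e. for every γ ∈ Γ₀(N), the matrix W γ W⁻¹ lies in Γ₀(N). -/

import Mathlib

open CongruenceSubgroup MatrixGroups

/-- Conjugation by an Atkin–Lehner matrix `W = (a·e, b; c·N, d·e)` of determinant `e`
(for an exact divisor `e` of `N`) maps `Γ₀(N)` into itself. -/
theorem atkinLehner_conjugation_preserves_Gamma0
    (N e : ℕ) (hN : 0 < N) (he : e ∣ N) (hexact : Nat.Coprime e (N / e))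
    (a b c d : ℤ)
    (W : Matrix (Fin 2) (Fin 2) ℚ)
    (hW : W = !![(a * e : ℤ), (b : ℤ); (c * N : ℤ), (d * e : ℤ)].map (fun x => (x : ℚ)))
    (hdet : W.det = (e : ℚ))
    (γ : SL(2, ℤ)) (hγ : γ ∈ Gamma0 N) :
    ∃ δ : SL(2, ℤ), δ ∈ Gamma0 N ∧
      ((δ : Matrix (Fin 2) (Fin 2) ℤ).map (fun x => (x : ℚ)))
        = W * ((γ : Matrix (Fin 2) (Fin 2) ℤ).map (fun x => (x : ℚ))) * W⁻¹ := by
  -- notation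
  obtain ⟨m, hm⟩ := he
  have hepos : 0 < e := by
    rcases Nat.eq_zero_or_pos e with h0 | h
    · exfalso; rw [h0, zero_mul] at hm; omega
    · exact h
  set p : ℤ := γ 0 0 with hp
  set q : ℤ := γ 0 1 with hq
  set r : ℤ := γ 1 0 with hr
  set s : ℤ := γ 1 1 with hs
  have hrdvd : (N : ℤ) ∣ r := by
    have := Gamma0_mem.mp hγ
    exact (ZMod.intCast_zmod_eq_zero_iff_dvd _ _).mp this
  obtain ⟨k, hk⟩ := hrdvd
  have hγdet : p * s - q * r = 1 := by
    have := γ.2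
    rw [Matrix.det_fin_two] at this
    linarith [this]
  -- integer determinant relation : a*d*e - b*c*m = 1
  have hNe : (N : ℤ) = (e : ℤ) * (m : ℤ) := by exact_mod_cast congrArg Nat.cast hm
  have hdetZ : a * d * e - b * c * m = 1 := by
    have hQ : ((a * e) * (d * e) - b * (c * N) : ℚ) = (e : ℚ) := by
      rw [hW] at hdet
      simpa [Matrix.det_fin_two] using hdet
    have hQ' : ((a * e) * (d * e) - b * (c * N) : ℤ) = (e : ℤ) := by
      exact_mod_cast hQ
    have : (e : ℤ) * (a * d * e - b * c * m) = (e : ℤ) * 1 := by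
      rw [hNe] at hQ'; ring_nf; ring_nf at hQ'; linarith
    have hez : (e : ℤ) ≠ 0 := by exact_mod_cast hepos.ne'
    exact mul_left_cancel₀ hez this
  -- the conjugated matrix, over ℤ
  set D : Matrix (Fin 2) (Fin 2) ℤ :=
    !![a*d*e*p + b*d*r - a*c*N*q - b*c*m*s, -(a*b*p) - b*b*m*k + a*a*e*q + a*b*s;
       (N : ℤ) * (c*d*p + d*d*e*k - c*c*m*q - c*d*s),
       -(b*c*m*p) - b*d*r + a*c*N*q + a*d*e*s] with hD
  have hDdet : D.det = 1 := by
    rw [hD]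
    rw [Matrix.det_fin_two_of]
    rw [hk, hNe] at hγdet ⊢
    linear_combination (a*d*e - b*c*m)^2 * hγdet + ((a*d*e - b*c*m) + 1) * hdetZ
  refine ⟨⟨D, hDdet⟩, ?_, ?_⟩
  · refine Gamma0_mem.mpr ?_
    show ((D 1 0 : ℤ) : ZMod N) = 0
    rw [hD]
    simp
  · -- matrix equality
    have hWdet : IsUnit W.det := by
      rw [hdet]
      simp only [isUnit_iff_ne_zero, Ne, Nat.cast_eq_zero]
      exact hepos.ne'
    have hmul : (D.map (fun x => (x : ℚ))) * W
        = W * ((γ : Matrix (Fin 2) (Fin 2) ℤ).map (fun x => (x : ℚ))) := by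
      have hNQ : (N : ℚ) = (e : ℚ) * (m : ℚ) := by exact_mod_cast congrArg Nat.cast hm
      have hkQ : (r : ℚ) = (N : ℚ) * (k : ℚ) := by exact_mod_cast congrArg Int.cast hk
      have hdetZQ : (a : ℚ) * d * e - b * c * m = 1 := by exact_mod_cast hdetZ
      ext i j
      fin_cases i <;> fin_cases j
      · simp [hD, hW, Matrix.mul_apply, Fin.sum_univ_two, Matrix.map_apply, ← hp, ← hq, ← hr, ← hs]
        push_cast
        rw [hkQ, hNQ]
        linear_combination ((e : ℚ) * (a * p + b * m * k)) * hdetZQ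
      · simp [hD, hW, Matrix.mul_apply, Fin.sum_univ_two, Matrix.map_apply, ← hp, ← hq, ← hr, ← hs]
        push_cast
        rw [hkQ, hNQ]
        linear_combination ((e : ℚ) * a * q + b * s) * hdetZQ
      · simp [hD, hW, Matrix.mul_apply, Fin.sum_univ_two, Matrix.map_apply, ← hp, ← hq, ← hr, ← hs]
        push_cast
        rw [hkQ, hNQ]
        linear_combination ((e : ℚ) * m * c * p + e^2 * m * d * k) * hdetZQ
      · simp [hD, hW, Matrix.mul_apply, Fin.sum_univ_two, Matrix.map_apply, ← hp, ← hq, ← hr, ← hs]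
        push_cast
        rw [hkQ, hNQ]
        linear_combination ((e : ℚ) * m * c * q + e * d * s) * hdetZQ
    calc (D.map (fun x => (x : ℚ)))
        = (D.map (fun x => (x : ℚ))) * W * W⁻¹ :=
          (Matrix.mul_nonsing_inv_cancel_right W _ hWdet).symm
      _ = W * ((γ : Matrix (Fin 2) (Fin 2) ℤ).map (fun x => (x : ℚ))) * W⁻¹ := by rw [hmul]
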